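/- Let P be a poset and 𝓜 a minimal subset selection on P. Then P is 𝓜-continuous if and only if the 𝓜-convergence structure in P is topological (i.e., every net converging to a point x in the topology τ_𝓜 also 𝓜-converges to x). -/

import Mathlib

universe u

/-- A directed preordered index for a net: `r` is reflexive, transitive,
the index type is nonempty, and `r` is directed. -/
structure IsDirNet {I : Type u} (r : I → I → Prop) : Prop where
  refl : ∀ i, r i i
  trans : ∀ {i j k : I}, r i j → r j k → r i k
  nonempty : Nonempty I
  directed : ∀ i j, ∃ k, r i k ∧ r j k

/-- A minimal subset selection on a poset `P`. -/
def MinSel {P : Type u} [PartialOrder P] (M : Set (Set P)) : Prop :=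
  (∅ : Set P) ∉ M ∧ ∀ x : P, {x} ∈ M

/-- The net `f : I → P` (indexed by `(I, r)`) `𝓜`-converges to `x`. -/
def MConv {P : Type u} [PartialOrder P] (M : Set (Set P))
    {I : Type u} (r : I → I → Prop) (f : I → P) (x : P) : Prop :=
  ∃ A : Set P, ∃ s : P, A ∈ M ∧ IsLUB A s ∧ x ≤ s ∧
    ∀ a ∈ A, ∃ i₀, ∀ i, r i₀ i → a ≤ f i

/-- The topology `τ_𝓜` induced by `𝓜`-convergence, as a collection of open sets. -/
def mTop {P : Type u} [PartialOrder P] (M : Set (Set P)) : Set (Set P) :=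
  {U | ∀ (I : Type u) (r : I → I → Prop) (f : I → P) (x : P),
      IsDirNet r → MConv M r f x → x ∈ U → ∃ i₀, ∀ i, r i₀ i → f i ∈ U}

/-- The `𝓜`-convergence structure is topological: every net converging to `x` with
respect to `τ_𝓜` also `𝓜`-converges to `x`. -/
def MTopological {P : Type u} [PartialOrder P] (M : Set (Set P)) : Prop :=
  ∀ (I : Type u) (r : I → I → Prop) (f : I → P) (x : P), IsDirNet r →
    (∀ U ∈ mTop M, x ∈ U → ∃ i₀, ∀ i, r i₀ i → f i ∈ U) →
    MConv M r f x

/-- The `𝓜`-way-below relation `x ≪_𝓜 y`. -/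
def wayBelowM {P : Type u} [PartialOrder P] (M : Set (Set P)) (x y : P) : Prop :=
  ∀ (A : Set P) (s : P), A ∈ M → IsLUB A s → y ≤ s →
    ∃ B : Set P, B.Nonempty ∧ B.Finite ∧ B ⊆ A ∧ upperBounds B ⊆ Set.Ici x

/-- `𝓜`-continuity of the poset `P`. -/
def MCont {P : Type u} [PartialOrder P] (M : Set (Set P)) : Prop :=
  ∀ x : P,
    (∃ A : Set P, ∃ s : P, A ∈ M ∧ IsLUB A s ∧ A ⊆ {y | wayBelowM M y x} ∧ x ≤ s) ∧
    {y | wayBelowM M x y} ∈ mTop M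

section Aux

variable {P : Type u} [PartialOrder P] {M : Set (Set P)}

lemma memM_nonempty (hM : MinSel M) {A : Set P} (hA : A ∈ M) : A.Nonempty := by
  rcases Set.eq_empty_or_nonempty A with h | h
  · exact absurd (h ▸ hA) hM.1
  · exact h

lemma univ_mem_mTop : (Set.univ : Set P) ∈ mTop M := by
  intro I r f x hdir _ _
  obtain ⟨i⟩ := hdir.nonempty
  exact ⟨i, fun _ _ => Set.mem_univ _⟩

lemma inter_mem_mTop {U V : Set P} (hU : U ∈ mTop M) (hV : V ∈ mTop M) :
    U ∩ V ∈ mTop M := by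
  intro I r f x hdir hconv hx
  obtain ⟨i₁, h₁⟩ := hU I r f x hdir hconv hx.1
  obtain ⟨i₂, h₂⟩ := hV I r f x hdir hconv hx.2
  obtain ⟨k, hk1, hk2⟩ := hdir.directed i₁ i₂
  exact ⟨k, fun i hi => ⟨h₁ i (hdir.trans hk1 hi), h₂ i (hdir.trans hk2 hi)⟩⟩

lemma wayBelow_le (hM : MinSel M) {x y : P} (h : wayBelowM M x y) : x ≤ y := by
  obtain ⟨B, hBne, _, hBsub, hub⟩ := h {y} y (hM.2 y) isLUB_singleton le_rfl
  have hyB : y ∈ upperBounds B := fun z hz => le_of_eq (hBsub hz)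
  exact hub hyB

/-- Index type of the "finite subsets with tagged upper bounds" net. -/
def FinIdx {P : Type u} [PartialOrder P] (B : Set P) (Q : P → Prop) : Type u :=
  {p : Set P × P // p.1.Nonempty ∧ p.1.Finite ∧ p.1 ⊆ B ∧ p.2 ∈ upperBounds p.1 ∧ Q p.2}

def finR {P : Type u} [PartialOrder P] (B : Set P) (Q : P → Prop) :
    FinIdx B Q → FinIdx B Q → Prop := fun p q => p.1.1 ⊆ q.1.1

def finG {P : Type u} [PartialOrder P] (B : Set P) (Q : P → Prop) :
    FinIdx B Q → P := fun p => p.1.2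

lemma finG_Q {B : Set P} {Q : P → Prop} (k : FinIdx B Q) : Q (finG B Q k) :=
  k.2.2.2.2.2

lemma finIdx_isDirNet {B : Set P} {Q : P → Prop} (hBne : B.Nonempty)
    (H : ∀ G : Set P, G.Nonempty → G.Finite → G ⊆ B → ∃ w ∈ upperBounds G, Q w) :
    IsDirNet (finR B Q) := by
  constructor
  · exact fun i => subset_rfl
  · exact fun h1 h2 => h1.trans h2
  · obtain ⟨b, hb⟩ := hBne
    obtain ⟨w, hw1, hw2⟩ := H {b} (Set.singleton_nonempty b) (Set.finite_singleton b)
      (Set.singleton_subset_iff.mpr hb)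
    exact ⟨⟨({b}, w), Set.singleton_nonempty b, Set.finite_singleton b,
      Set.singleton_subset_iff.mpr hb, hw1, hw2⟩⟩
  · intro i j
    obtain ⟨w, hw1, hw2⟩ := H (i.1.1 ∪ j.1.1) (i.2.1.mono Set.subset_union_left)
      (i.2.2.1.union j.2.2.1) (Set.union_subset i.2.2.2.1 j.2.2.2.1)
    exact ⟨⟨(i.1.1 ∪ j.1.1, w), i.2.1.mono Set.subset_union_left,
      i.2.2.1.union j.2.2.1, Set.union_subset i.2.2.2.1 j.2.2.2.1, hw1, hw2⟩,
      Set.subset_union_left, Set.subset_union_right⟩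

lemma finIdx_MConv {B : Set P} {Q : P → Prop} (hB : B ∈ M) {t y : P}
    (hlub : IsLUB B t) (hyt : y ≤ t)
    (H : ∀ G : Set P, G.Nonempty → G.Finite → G ⊆ B → ∃ w ∈ upperBounds G, Q w) :
    MConv M (finR B Q) (finG B Q) y := by
  refine ⟨B, t, hB, hlub, hyt, fun b hb => ?_⟩
  obtain ⟨w, hw1, hw2⟩ := H {b} (Set.singleton_nonempty b) (Set.finite_singleton b)
    (Set.singleton_subset_iff.mpr hb)
  refine ⟨⟨({b}, w), Set.singleton_nonempty b, Set.finite_singleton b,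
    Set.singleton_subset_iff.mpr hb, hw1, hw2⟩, fun k hk => ?_⟩
  exact k.2.2.2.2.1 (hk rfl)

lemma lb_open_wayBelow (hM : MinSel M) {U : Set P} (hU : U ∈ mTop M) {x a : P}
    (hx : x ∈ U) (ha : ∀ p ∈ U, a ≤ p) : wayBelowM M a x := by
  intro B t hB hlub hxt
  by_contra h
  push_neg at h
  have H : ∀ G : Set P, G.Nonempty → G.Finite → G ⊆ B →
      ∃ w ∈ upperBounds G, ¬ a ≤ w := by
    intro G h1 h2 h3
    obtain ⟨w, hw1, hw2⟩ := Set.not_subset.mp (h G h1 h2 h3)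
    exact ⟨w, hw1, hw2⟩
  have hdir := finIdx_isDirNet (memM_nonempty hM hB) H
  have hconv := finIdx_MConv (M := M) hB hlub hxt H
  obtain ⟨k₀, hk₀⟩ := hU _ _ _ x hdir hconv hx
  exact finG_Q k₀ (ha _ (hk₀ k₀ (hdir.refl k₀)))

lemma not_wayBelow {x z : P} (h : ¬ wayBelowM M x z) :
    ∃ A : Set P, ∃ s : P, A ∈ M ∧ IsLUB A s ∧ z ≤ s ∧
      ∀ F : Set P, F.Nonempty → F.Finite → F ⊆ A → ∃ w ∈ upperBounds F, ¬ x ≤ w := by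
  unfold wayBelowM at h
  push_neg at h
  obtain ⟨A, s, hA, hlub, hzs, hF⟩ := h
  refine ⟨A, s, hA, hlub, hzs, fun F h1 h2 h3 => ?_⟩
  obtain ⟨w, hw1, hw2⟩ := Set.not_subset.mp (hF F h1 h2 h3)
  exact ⟨w, hw1, hw2⟩

lemma ev_finite {I : Type u} {r : I → I → Prop} (hdir : IsDirNet r) (f : I → P)
    {G : Set P} (hG : G.Finite)
    (h : ∀ a ∈ G, ∃ i₀, ∀ i, r i₀ i → a ≤ f i) :
    ∃ i₀, ∀ i, r i₀ i → ∀ a ∈ G, a ≤ f i := by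
  refine Set.Finite.induction_on
    (motive := fun G _ => (∀ a ∈ G, ∃ i₀, ∀ i, r i₀ i → a ≤ f i) →
      ∃ i₀, ∀ i, r i₀ i → ∀ a ∈ G, a ≤ f i) G hG ?_ ?_ h
  · intro _
    obtain ⟨i⟩ := hdir.nonempty
    exact ⟨i, fun i _ a ha => absurd ha (Set.notMem_empty a)⟩
  · intro b G hb hGfin ih h
    obtain ⟨i₁, h₁⟩ := h b (Set.mem_insert b G)
    obtain ⟨i₂, h₂⟩ := ih (fun a ha => h a (Set.mem_insert_of_mem b ha))
    obtain ⟨k, hk1, hk2⟩ := hdir.directed i₁ i₂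
    refine ⟨k, fun i hi a ha => ?_⟩
    rcases ha with rfl | ha
    · exact h₁ i (hdir.trans hk1 hi)
    · exact h₂ i (hdir.trans hk2 hi) a ha

lemma interp (hM : MinSel M) (top : MTopological M) {x y : P} (hxy : wayBelowM M x y)
    {B : Set P} {t : P} (hB : B ∈ M) (hlub : IsLUB B t) (hyt : y ≤ t) :
    ∃ G : Set P, G.Nonempty ∧ G.Finite ∧ G ⊆ B ∧
      upperBounds G ⊆ {z | wayBelowM M x z} := by
  by_contra h
  push_neg at h
  have H : ∀ G : Set P, G.Nonempty → G.Finite → G ⊆ B →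
      ∃ z ∈ upperBounds G, ¬ wayBelowM M x z := by
    intro G h1 h2 h3
    obtain ⟨z, hz1, hz2⟩ := Set.not_subset.mp (h G h1 h2 h3)
    exact ⟨z, hz1, hz2⟩
  set Q : P → Prop := fun z => ¬ wayBelowM M x z with hQ
  have dirJ : IsDirNet (finR B Q) := finIdx_isDirNet (memM_nonempty hM hB) H
  have convJ : MConv M (finR B Q) (finG B Q) y := finIdx_MConv hB hlub hyt H
  have key : ∀ j : FinIdx B Q, ∃ A : Set P, ∃ s : P, A ∈ M ∧ IsLUB A s ∧ finG B Q j ≤ s ∧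
      ∀ F : Set P, F.Nonempty → F.Finite → F ⊆ A → ∃ w ∈ upperBounds F, ¬ x ≤ w :=
    fun j => not_wayBelow (finG_Q j)
  choose A s hA hslub hzs hAF using key
  set Q' : P → Prop := fun w => ¬ x ≤ w with hQ'
  have dirK : ∀ j, IsDirNet (finR (A j) Q') :=
    fun j => finIdx_isDirNet (memM_nonempty hM (hA j)) (hAF j)
  have convK : ∀ j, MConv M (finR (A j) Q') (finG (A j) Q') (finG B Q j) :=
    fun j => finIdx_MConv (hA j) (hslub j) (hzs j) (hAF j)
  let L := FinIdx B Q × (∀ j : FinIdx B Q, FinIdx (A j) Q')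
  let rL : L → L → Prop := fun l l' => finR B Q l.1 l'.1 ∧ ∀ j, finR (A j) Q' (l.2 j) (l'.2 j)
  let d : L → P := fun l => finG (A l.1) Q' (l.2 l.1)
  have dirL : IsDirNet rL := by
    constructor
    · exact fun l => ⟨dirJ.refl l.1, fun j => (dirK j).refl (l.2 j)⟩
    · exact fun h1 h2 => ⟨dirJ.trans h1.1 h2.1, fun j => (dirK j).trans (h1.2 j) (h2.2 j)⟩
    · obtain ⟨j⟩ := dirJ.nonempty
      exact ⟨⟨j, fun j' => ((dirK j').nonempty).some⟩⟩
    · intro l l'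
      obtain ⟨j, hj1, hj2⟩ := dirJ.directed l.1 l'.1
      have hφ : ∀ jj, ∃ k, finR (A jj) Q' (l.2 jj) k ∧ finR (A jj) Q' (l'.2 jj) k :=
        fun jj => (dirK jj).directed (l.2 jj) (l'.2 jj)
      choose φ hφ1 hφ2 using hφ
      exact ⟨⟨j, φ⟩, ⟨hj1, hφ1⟩, ⟨hj2, hφ2⟩⟩
  have hτ : ∀ U ∈ mTop M, y ∈ U → ∃ l₀ : L, ∀ l, rL l₀ l → d l ∈ U := by
    intro U hU hyU
    obtain ⟨j₀, hj₀⟩ := hU _ _ _ y dirJ convJ hyU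
    have hh : ∀ j : FinIdx B Q, ∃ k₀ : FinIdx (A j) Q',
        ∀ k, finR (A j) Q' k₀ k → finR B Q j₀ j → finG (A j) Q' k ∈ U := by
      intro j
      by_cases hrel : finR B Q j₀ j
      · obtain ⟨k₀, hk₀⟩ := hU _ _ _ (finG B Q j) (dirK j) (convK j) (hj₀ j hrel)
        exact ⟨k₀, fun k hk _ => hk₀ k hk⟩
      · exact ⟨((dirK j).nonempty).some, fun _ _ h' => absurd h' hrel⟩
    choose φ₀ hφ₀ using hh
    refine ⟨⟨j₀, φ₀⟩, fun l hl => ?_⟩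
    exact hφ₀ l.1 (l.2 l.1) (hl.2 l.1) hl.1
  obtain ⟨C, c, hC, hclub, hyc, hCev⟩ := top L rL d y dirL hτ
  obtain ⟨F, hFne, hFfin, hFC, hFub⟩ := hxy C c hC hclub hyc
  obtain ⟨l₀, hl₀⟩ := ev_finite dirL d hFfin (fun a ha => hCev a (hFC ha))
  have hxd : x ≤ d l₀ := hFub (fun a ha => hl₀ l₀ (dirL.refl l₀) a ha)
  exact finG_Q (l₀.2 l₀.1) hxd

lemma m1_of_top (hM : MinSel M) (top : MTopological M) (x : P) :
    ∃ A : Set P, ∃ s : P, A ∈ M ∧ IsLUB A s ∧ A ⊆ {y | wayBelowM M y x} ∧ x ≤ s := by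
  let N : Type u := {p : Set P × P // p.1 ∈ mTop M ∧ x ∈ p.1 ∧ p.2 ∈ p.1}
  let rN : N → N → Prop := fun p q => q.1.1 ⊆ p.1.1
  let fN : N → P := fun p => p.1.2
  have dirN : IsDirNet rN := by
    constructor
    · exact fun p => subset_rfl
    · exact fun h1 h2 => h2.trans h1
    · exact ⟨⟨(Set.univ, x), univ_mem_mTop, Set.mem_univ x, Set.mem_univ x⟩⟩
    · intro p q
      exact ⟨⟨(p.1.1 ∩ q.1.1, x), inter_mem_mTop p.2.1 q.2.1, ⟨p.2.2.1, q.2.2.1⟩,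
        ⟨p.2.2.1, q.2.2.1⟩⟩, Set.inter_subset_left, Set.inter_subset_right⟩
  have hτ : ∀ U ∈ mTop M, x ∈ U → ∃ p₀ : N, ∀ q, rN p₀ q → fN q ∈ U := by
    intro U hU hxU
    exact ⟨⟨(U, x), hU, hxU, hxU⟩, fun q hq => hq q.2.2.2⟩
  obtain ⟨A, s, hA, hlub, hxs, hev⟩ := top N rN fN x dirN hτ
  refine ⟨A, s, hA, hlub, fun a ha => ?_, hxs⟩
  obtain ⟨p₀, hp₀⟩ := hev a ha
  refine lb_open_wayBelow hM p₀.2.1 p₀.2.2.1 fun z hz => ?_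
  exact hp₀ ⟨(p₀.1.1, z), p₀.2.1, p₀.2.2.1, hz⟩ subset_rfl

end Aux


/-- `P` is 𝓜-continuous iff the 𝓜-convergence structure in `P` is topological. -/
theorem stmt_5 {P : Type u} [PartialOrder P] (M : Set (Set P)) (hM : MinSel M) :
    MCont M ↔ MTopological M := by
  constructor
  · intro hcont I r f x hdir hτ
    obtain ⟨⟨A, s, hA, hlub, hsub, hxs⟩, _⟩ := hcont x
    refine ⟨A, s, hA, hlub, hxs, fun a ha => ?_⟩
    obtain ⟨i₀, h⟩ := hτ _ (hcont a).2 (hsub ha)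
    exact ⟨i₀, fun i hi => wayBelow_le hM (h i hi)⟩
  · intro top x
    refine ⟨m1_of_top hM top x, ?_⟩
    intro I r f y hdir hconv hy
    obtain ⟨A, s, hA, hlub, hys, hev⟩ := hconv
    obtain ⟨G, hGne, hGfin, hGA, hGsub⟩ := interp hM top hy hA hlub hys
    obtain ⟨i₀, hi₀⟩ := ev_finite hdir f hGfin (fun a ha => hev a (hGA ha))
    exact ⟨i₀, fun i hi => hGsub (fun a ha => hi₀ i hi a ha)⟩
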